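/- Let g_1, …, g_{n+1} be a homogeneous regular sequence in S with deg g_i = e_i ≥ 1 for each i. Then m^s ⊆ (g_1, …, g_{n+1}) where s = e_1 + ⋯ + e_{n+1} − n; equivalently, every homogeneous element of S of degree strictly greater than e_1 + ⋯ + e_{n+1} − (n+1) lies in (g_1, …, g_{n+1}). -/

import Mathlib

/-!
STATEMENT 10: Let `g_1, …, g_{n+1}` be a homogeneous regular sequence in
`S = k[x_0, …, x_n]` with `deg g_i = e_i ≥ 1`. Then `m^s ⊆ (g_1, …, g_{n+1})` where
`s = e_1 + ⋯ + e_{n+1} − n`; equivalently, every homogeneous element of `S` of degree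
strictly greater than `e_1 + ⋯ + e_{n+1} − (n+1)` lies in `(g_1, …, g_{n+1})`.
-/

noncomputable section

open MvPolynomial

/-- The homogeneous maximal ideal `m = (x_0, …, x_n)` of `k[x_0, …, x_n]`. -/
def maxIdeal (k : Type) [Field k] (n : ℕ) : Ideal (MvPolynomial (Fin (n + 1)) k) :=
  Ideal.span (Set.range MvPolynomial.X)

namespace Stmt10Aux

open Finset Module

/-- Multiplying by a homogeneous polynomial shifts homogeneous components. -/
theorem aux_hc_mul {σ R : Type*} [CommSemiring R] {g : MvPolynomial σ R} {e : ℕ}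
    (hg : g.IsHomogeneous e) (b : MvPolynomial σ R) (D : ℕ) :
    homogeneousComponent D (g * b) =
      if e ≤ D then g * homogeneousComponent (D - e) b else 0 := by
  by_cases hD : e ≤ D
  · rw [if_pos hD]
    conv_lhs => rw [b.as_sum, Finset.mul_sum, map_sum]
    conv_rhs => rw [b.as_sum, map_sum, Finset.mul_sum]
    refine Finset.sum_congr rfl fun v _ => ?_
    rw [homogeneousComponent_of_mem
        ((mem_homogeneousSubmodule _ _).2 (hg.mul (isHomogeneous_monomial _ rfl))),
      homogeneousComponent_of_mem
        ((mem_homogeneousSubmodule _ _).2 (isHomogeneous_monomial _ rfl)),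
      mul_ite, mul_zero]
    simp only [show (D = e + v.degree) ↔ (D - e = v.degree) from by omega]
  · rw [if_neg hD]
    conv_lhs => rw [b.as_sum, Finset.mul_sum, map_sum]
    refine Finset.sum_eq_zero fun v _ => ?_
    rw [homogeneousComponent_of_mem
        ((mem_homogeneousSubmodule _ _).2 (hg.mul (isHomogeneous_monomial _ rfl))),
      if_neg (show ¬(D = e + v.degree) by omega)]

/-- An ideal generated by homogeneous elements contains all homogeneous components of
its members. -/
theorem comp_mem_span {σ R : Type*} [CommRing R] {G : Set (MvPolynomial σ R)}
    (hG : ∀ x ∈ G, ∃ d, x.IsHomogeneous d) {f : MvPolynomial σ R}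
    (hf : f ∈ Ideal.span G) (D : ℕ) :
    homogeneousComponent D f ∈ Ideal.span G := by
  revert D
  refine Submodule.span_induction (p := fun x _ => ∀ D, homogeneousComponent D x ∈ Ideal.span G)
    ?_ ?_ ?_ ?_ hf
  · intro x hx D
    obtain ⟨d, hd⟩ := hG x hx
    rw [homogeneousComponent_of_mem ((mem_homogeneousSubmodule _ _).2 hd)]
    split
    · exact Ideal.subset_span hx
    · exact Ideal.zero_mem _
  · intro D; simp only [map_zero]; exact Ideal.zero_mem _
  · intro x y _ _ hx hy D; rw [map_add]; exact Ideal.add_mem _ (hx D) (hy D)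
  · intro a x _ ih D
    rw [smul_eq_mul, ← sum_homogeneousComponent a, Finset.sum_mul, map_sum]
    refine Ideal.sum_mem _ fun i _ => ?_
    rw [aux_hc_mul (homogeneousComponent_isHomogeneous i a)]
    split
    · exact Ideal.mul_mem_left _ _ (ih _)
    · exact Ideal.zero_mem _

theorem comp_mul_low {σ R : Type*} [CommSemiring R] {a b : MvPolynomial σ R} {s t : ℕ}
    (ha : ∀ i < s, homogeneousComponent i a = 0)
    (hb : ∀ j < t, homogeneousComponent j b = 0)
    {D : ℕ} (hD : D < s + t) : homogeneousComponent D (a * b) = 0 := by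
  conv_lhs => rw [← sum_homogeneousComponent a, Finset.sum_mul, map_sum]
  refine Finset.sum_eq_zero fun i _ => ?_
  rw [aux_hc_mul (homogeneousComponent_isHomogeneous i a)]
  by_cases hi : i < s
  · rw [ha i hi]; simp
  · split
    · rw [hb (D - i) (by omega), mul_zero]
    · rfl

variable {k : Type} [Field k]

theorem fd_hs (σ : Type) [Finite σ] (D : ℕ) :
    FiniteDimensional k (homogeneousSubmodule σ k D) := by
  rw [homogeneousSubmodule_eq_finsupp_supported]
  have hfin : {d : σ →₀ ℕ | d.degree = D}.Finite :=
    (Finsupp.finite_of_degree_le D).subset fun d hd => le_of_eq hd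
  haveI : Finite ↥{d : σ →₀ ℕ | d.degree = D} := hfin.to_subtype
  exact Module.Finite.equiv (AddMonoidAlgebra.supportedEquivFinsupp _).symm

theorem hs_zero_eq (σ : Type) :
    homogeneousSubmodule σ k 0 = Submodule.span k {(1 : MvPolynomial σ k)} := by
  ext f
  rw [mem_homogeneousSubmodule, Submodule.mem_span_singleton]
  constructor
  · intro hf
    have h1 : homogeneousComponent 0 f = f := by
      rw [homogeneousComponent_of_mem ((mem_homogeneousSubmodule _ _).2 hf)]; simp
    exact ⟨coeff 0 f, by rw [smul_eq_C_mul, mul_one, ← homogeneousComponent_zero, h1]⟩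
  · rintro ⟨c, rfl⟩
    have : c • (1 : MvPolynomial σ k) = C c := by rw [smul_eq_C_mul, mul_one]
    rw [this]
    exact isHomogeneous_C σ c

theorem finrank_hs_zero (σ : Type) :
    finrank k (homogeneousSubmodule σ k 0) = 1 := by
  rw [hs_zero_eq]
  exact finrank_span_singleton one_ne_zero

theorem hs_le_span_X {σ : Type} {D : ℕ} (hD : 1 ≤ D) {f : MvPolynomial σ k}
    (hf : f.IsHomogeneous D) : f ∈ Ideal.span (Set.range (X : σ → MvPolynomial σ k)) := by
  rw [← Set.image_univ, mem_ideal_span_X_image]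
  intro m hm
  have hdeg : m.degree = D := by
    by_contra h
    exact mem_support_iff.1 hm (hf.coeff_eq_zero h)
  have hm0 : m ≠ 0 := by
    intro h; rw [h, map_zero] at hdeg; omega
  obtain ⟨i, hi⟩ := Finsupp.ne_iff.1 hm0
  exact ⟨i, Set.mem_univ i, by simpa using hi⟩

theorem coeff_zero_of_mem_span_X {σ : Type} {f : MvPolynomial σ k}
    (hf : f ∈ Ideal.span (Set.range (X : σ → MvPolynomial σ k))) : coeff 0 f = 0 := by
  rw [← Set.image_univ, mem_ideal_span_X_image] at hf
  by_contra h
  obtain ⟨i, -, hi⟩ := hf 0 (mem_support_iff.2 h)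
  simp at hi

theorem const_eq_zero_of_mem_span_X {σ : Type} {f : MvPolynomial σ k}
    (hf0 : f.IsHomogeneous 0)
    (hf : f ∈ Ideal.span (Set.range (X : σ → MvPolynomial σ k))) : f = 0 := by
  have h1 : homogeneousComponent 0 f = f := by
    rw [homogeneousComponent_of_mem ((mem_homogeneousSubmodule _ _).2 hf0)]; simp
  rw [← h1, homogeneousComponent_zero, coeff_zero_of_mem_span_X hf, map_zero]

theorem X_reg {σ : Type} (s : Set σ) (m : σ) (hm : m ∉ s) (f : MvPolynomial σ k)
    (h : X m * f ∈ Ideal.span (X '' s : Set (MvPolynomial σ k))) :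
    f ∈ Ideal.span (X '' s : Set (MvPolynomial σ k)) := by
  rw [mem_ideal_span_X_image] at h ⊢
  intro mon hmon
  have hmem : Finsupp.single m 1 + mon ∈ (X m * f).support := by
    rw [support_X_mul]
    exact Finset.mem_map_of_mem _ hmon
  obtain ⟨i, his, hi⟩ := h _ hmem
  refine ⟨i, his, ?_⟩
  have hne : m ≠ i := fun hh => hm (hh ▸ his)
  simpa [Finsupp.single_apply, hne] using hi

section core

variable {M : ℕ} {σ : Type} [Finite σ] (g : Fin M → MvPolynomial σ k) (e : Fin M → ℕ)

/-- The ideal generated by the first `m` elements of the sequence. -/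
def Jm (m : ℕ) : Ideal (MvPolynomial σ k) :=
  Ideal.span (g '' {i : Fin M | (i : ℕ) < m})

theorem Jm_succ (m : Fin M) :
    Jm g ((m : ℕ) + 1) = Jm g m ⊔ Ideal.span {g m} := by
  have : {i : Fin M | (i : ℕ) < (m : ℕ) + 1} = insert m {i : Fin M | (i : ℕ) < m} := by
    ext i
    simp only [Set.mem_setOf_eq, Set.mem_insert_iff, Fin.ext_iff]
    omega
  rw [Jm, this, Set.image_insert_eq, Ideal.span_insert, sup_comm, Jm]

theorem Jm_mono {m m' : ℕ} (h : m ≤ m') : Jm g m ≤ Jm g m' :=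
  Ideal.span_mono (Set.image_mono fun i hi => lt_of_lt_of_le hi h)

theorem Jm_hom {g : Fin M → MvPolynomial σ k} {e : Fin M → ℕ}
    (hhom : ∀ i, (g i).IsHomogeneous (e i)) (m : ℕ) :
    ∀ x ∈ g '' {i : Fin M | (i : ℕ) < m}, ∃ d, x.IsHomogeneous d := by
  rintro x ⟨i, -, rfl⟩; exact ⟨e i, hhom i⟩

/-- the degree-`D` part of `Jm g m`, as a `k`-submodule -/
def JV (m D : ℕ) : Submodule k (MvPolynomial σ k) :=
  (Jm g m).restrictScalars k ⊓ homogeneousSubmodule σ k D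

instance (m D : ℕ) : FiniteDimensional k (JV g m D) :=
  have := fd_hs (k := k) σ D
  Submodule.finiteDimensional_of_le (inf_le_right)

theorem key_rec (hhom : ∀ i, (g i).IsHomogeneous (e i)) (hne : ∀ i, g i ≠ 0)
    (hreg : ∀ (i : Fin M) (f : MvPolynomial σ k), g i * f ∈ Jm g i → f ∈ Jm g i)
    (m : Fin M) (D : ℕ) (hle : e m ≤ D) :
    finrank k (JV g ((m : ℕ) + 1) D) + finrank k (JV g m (D - e m)) =
      finrank k (JV g m D) + finrank k (homogeneousSubmodule σ k (D - e m)) := by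
  haveI := fd_hs (k := k) σ D
  haveI := fd_hs (k := k) σ (D - e m)
  set mulg : MvPolynomial σ k →ₗ[k] MvPolynomial σ k := LinearMap.mulLeft k (g m) with hmulg
  have hinj : Function.Injective mulg := fun x y h => by
    exact mul_right_injective₀ (hne m) (by simpa [hmulg] using h)
  set A := JV g m D with hA
  set B := Submodule.map mulg (homogeneousSubmodule σ k (D - e m)) with hB
  have hBle : B ≤ JV g ((m : ℕ) + 1) D := by
    rintro x ⟨b, hb, rfl⟩
    refine Submodule.mem_inf.2 ⟨?_, ?_⟩
    · show (g m) * b ∈ Jm g ((m : ℕ) + 1)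
      exact Ideal.mul_mem_right _ _ (Ideal.subset_span ⟨m, by simp, rfl⟩)
    · show (g m) * b ∈ homogeneousSubmodule σ k D
      rw [mem_homogeneousSubmodule]
      have := (hhom m).mul ((mem_homogeneousSubmodule _ _).1 hb)
      rwa [Nat.add_sub_cancel' hle] at this
  have hAle : A ≤ JV g ((m : ℕ) + 1) D := fun x hx =>
    Submodule.mem_inf.2 ⟨Jm_mono g (Nat.le_succ _) (Submodule.mem_inf.1 hx).1,
      (Submodule.mem_inf.1 hx).2⟩
  have claim1 : JV g ((m : ℕ) + 1) D = A ⊔ B := by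
    refine le_antisymm ?_ (sup_le hAle hBle)
    intro f hf
    obtain ⟨hfJ, hfV⟩ := Submodule.mem_inf.1 hf
    rw [Submodule.restrictScalars_mem, Jm_succ] at hfJ
    obtain ⟨a, haJ, y, hy, rfl⟩ := Submodule.mem_sup.1 hfJ
    obtain ⟨c, rfl⟩ := Ideal.mem_span_singleton.1 hy
    have hfD : homogeneousComponent D (a + g m * c) = a + g m * c := by
      rw [homogeneousComponent_of_mem hfV]; simp
    have hsum : a + g m * c =
        homogeneousComponent D a + g m * homogeneousComponent (D - e m) c := by
      conv_lhs => rw [← hfD]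
      rw [map_add, aux_hc_mul (hhom m), if_pos hle]
    rw [hsum]
    exact Submodule.add_mem_sup
      (Submodule.mem_inf.2 ⟨comp_mem_span (Jm_hom hhom _) haJ D, homogeneousComponent_mem D a⟩)
      ⟨homogeneousComponent (D - e m) c, homogeneousComponent_mem _ c, rfl⟩
  have claim2 : A ⊓ B = Submodule.map mulg (JV g m (D - e m)) := by
    apply le_antisymm
    · intro x hx
      obtain ⟨hxA, hxB⟩ := Submodule.mem_inf.1 hx
      obtain ⟨b, hbV, rfl⟩ := hxB
      have hgb : g m * b ∈ Jm g m := (Submodule.mem_inf.1 hxA).1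
      exact ⟨b, Submodule.mem_inf.2 ⟨hreg m b hgb, hbV⟩, rfl⟩
    · rintro x ⟨b, hb, rfl⟩
      obtain ⟨hbJ, hbV⟩ := Submodule.mem_inf.1 hb
      refine Submodule.mem_inf.2 ⟨Submodule.mem_inf.2 ⟨?_, ?_⟩, ⟨b, hbV, rfl⟩⟩
      · show (g m) * b ∈ Jm g m
        exact Ideal.mul_mem_left _ _ hbJ
      · show (g m) * b ∈ homogeneousSubmodule σ k D
        rw [mem_homogeneousSubmodule]
        have := (hhom m).mul ((mem_homogeneousSubmodule _ _).1 hbV)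
        rwa [Nat.add_sub_cancel' hle] at this
  have h1 := Submodule.finrank_sup_add_finrank_inf_eq A B
  rw [claim2] at h1
  have hBrk : finrank k B = finrank k (homogeneousSubmodule σ k (D - e m)) :=
    (LinearEquiv.finrank_eq (Submodule.equivMapOfInjective mulg hinj _)).symm
  have hIrk : finrank k (Submodule.map mulg (JV g m (D - e m))) = finrank k (JV g m (D - e m)) :=
    (LinearEquiv.finrank_eq (Submodule.equivMapOfInjective mulg hinj _)).symm
  rw [hBrk, hIrk] at h1
  rw [claim1]
  omega

theorem key_rec_lt (hhom : ∀ i, (g i).IsHomogeneous (e i)) (m : Fin M) (D : ℕ)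
    (hlt : D < e m) : JV g ((m : ℕ) + 1) D = JV g m D := by
  have hmono : JV g m D ≤ JV g ((m : ℕ) + 1) D := fun x hx => Submodule.mem_inf.2
    ⟨Jm_mono g (Nat.le_succ _) (Submodule.mem_inf.1 hx).1, (Submodule.mem_inf.1 hx).2⟩
  refine le_antisymm ?_ hmono
  intro f hf
  obtain ⟨hfJ, hfV⟩ := Submodule.mem_inf.1 hf
  rw [Submodule.restrictScalars_mem, Jm_succ] at hfJ
  obtain ⟨a, haJ, y, hy, rfl⟩ := Submodule.mem_sup.1 hfJ
  obtain ⟨c, rfl⟩ := Ideal.mem_span_singleton.1 hy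
  have hfD : homogeneousComponent D (a + g m * c) = a + g m * c := by
    rw [homogeneousComponent_of_mem hfV]; simp
  have hsum : a + g m * c = homogeneousComponent D a := by
    conv_lhs => rw [← hfD]
    rw [map_add, aux_hc_mul (hhom m), if_neg (by omega), add_zero]
  rw [hsum]
  exact Submodule.mem_inf.2 ⟨comp_mem_span (Jm_hom hhom _) haJ D, homogeneousComponent_mem D a⟩

/-- The "Hilbert series" of the quotient by the first `m` elements. -/
def Fser (m : ℕ) : PowerSeries ℤ :=
  PowerSeries.mk fun D =>
    (finrank k (homogeneousSubmodule σ k D) : ℤ) - (finrank k (JV g m D) : ℤ)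

theorem Fser_succ (hhom : ∀ i, (g i).IsHomogeneous (e i)) (hne : ∀ i, g i ≠ 0)
    (hreg : ∀ (i : Fin M) (f : MvPolynomial σ k), g i * f ∈ Jm g i → f ∈ Jm g i)
    (m : Fin M) :
    Fser g ((m : ℕ) + 1) = (1 - (PowerSeries.X (R := ℤ)) ^ (e m)) * Fser g m := by
  ext D
  rw [sub_mul, one_mul, map_sub, PowerSeries.coeff_X_pow_mul']
  simp only [Fser, PowerSeries.coeff_mk]
  by_cases hle : e m ≤ D
  · rw [if_pos hle]
    have h1 := key_rec g e hhom hne hreg m D hle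
    omega
  · rw [if_neg hle, sub_zero, key_rec_lt g e hhom m D (by omega)]

theorem Fser_prod (hhom : ∀ i, (g i).IsHomogeneous (e i)) (hne : ∀ i, g i ≠ 0)
    (hreg : ∀ (i : Fin M) (f : MvPolynomial σ k), g i * f ∈ Jm g i → f ∈ Jm g i) :
    Fser g M = (∏ i : Fin M, (1 - (PowerSeries.X (R := ℤ)) ^ (e i))) * Fser g 0 := by
  suffices h : ∀ m, m ≤ M → Fser g m =
      (∏ i ∈ univ.filter (fun i : Fin M => (i : ℕ) < m),
        (1 - (PowerSeries.X (R := ℤ)) ^ (e i))) * Fser g 0 by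
    have := h M le_rfl
    rwa [Finset.filter_true_of_mem (fun i _ => i.isLt)] at this
  intro m
  induction m with
  | zero => intro _; simp
  | succ m ih =>
    intro hm
    have hmM : m < M := hm
    have hstep := Fser_succ g e hhom hne hreg ⟨m, hmM⟩
    rw [show ((⟨m, hmM⟩ : Fin M) : ℕ) = m from rfl] at hstep
    have hins : univ.filter (fun i : Fin M => (i : ℕ) < m + 1) =
        insert ⟨m, hmM⟩ (univ.filter (fun i : Fin M => (i : ℕ) < m)) := by
      ext i
      simp only [Finset.mem_filter, Finset.mem_insert, Finset.mem_univ, true_and, Fin.ext_iff]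
      omega
    rw [hstep, ih (le_of_lt hmM), hins, Finset.prod_insert (by simp), mul_assoc]

theorem Fser_zero_eq :
    Fser (k := k) g 0 =
      PowerSeries.mk fun D => (finrank k (homogeneousSubmodule σ k D) : ℤ) := by
  ext D
  simp only [Fser, PowerSeries.coeff_mk]
  have h0 : JV (k := k) g 0 D = ⊥ := by
    have hempty : {i : Fin M | (i : ℕ) < 0} = ∅ := by ext; simp
    rw [JV, Jm, hempty, Set.image_empty, Ideal.span_empty]
    simp
  rw [h0, finrank_bot]
  rw [Nat.cast_zero, sub_zero]

end core


section final

variable {n : ℕ}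

theorem FX_eq_one (n : ℕ) :
    Fser (k := k) (fun i : Fin (n + 1) => (X i : MvPolynomial (Fin (n + 1)) k)) (n + 1) = 1 := by
  ext D
  simp only [Fser, PowerSeries.coeff_mk]
  have huniv : {i : Fin (n + 1) | (i : ℕ) < n + 1} = Set.univ := by
    ext i; simp [i.is_le]
  have hJ : Jm (k := k) (fun i : Fin (n + 1) => X i) (n + 1)
      = Ideal.span (Set.range (X : Fin (n + 1) → MvPolynomial (Fin (n + 1)) k)) := by
    rw [Jm, huniv, Set.image_univ]
  cases D with
  | zero =>
    have hbot : JV (k := k) (fun i : Fin (n + 1) => X i) (n + 1) 0 = ⊥ := by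
      rw [eq_bot_iff]
      intro f hf
      obtain ⟨hfJ, hfV⟩ := Submodule.mem_inf.1 hf
      rw [Submodule.restrictScalars_mem, hJ] at hfJ
      rw [Submodule.mem_bot]
      exact const_eq_zero_of_mem_span_X ((mem_homogeneousSubmodule _ _).1 hfV) hfJ
    rw [hbot, finrank_bot, finrank_hs_zero]
    simp
  | succ D =>
    have heq : JV (k := k) (fun i : Fin (n + 1) => X i) (n + 1) (D + 1)
        = homogeneousSubmodule (Fin (n + 1)) k (D + 1) := by
      rw [JV, inf_eq_right]
      intro f hf
      rw [Submodule.restrictScalars_mem, hJ]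
      exact hs_le_span_X (Nat.succ_le_succ (Nat.zero_le D)) ((mem_homogeneousSubmodule _ _).1 hf)
    rw [heq]
    simp [PowerSeries.coeff_one]

theorem one_sub_pow_eq (e : ℕ) :
    (1 - (PowerSeries.X (R := ℤ)) ^ e) =
      (∑ j ∈ Finset.range e, (PowerSeries.X (R := ℤ)) ^ j) * (1 - PowerSeries.X) := by
  have h := geom_sum_mul (PowerSeries.X (R := ℤ)) e
  linear_combination h

theorem main_membership (g : Fin (n + 1) → MvPolynomial (Fin (n + 1)) k)
    (e : Fin (n + 1) → ℕ) (he : ∀ i, 1 ≤ e i) (hhom : ∀ i, (g i).IsHomogeneous (e i))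
    (hne : ∀ i, g i ≠ 0)
    (hreg : ∀ (i : Fin (n + 1)) (f : MvPolynomial (Fin (n + 1)) k),
      g i * f ∈ Jm g i → f ∈ Jm g i)
    (h : MvPolynomial (Fin (n + 1)) k) (D : ℕ) (hh : h.IsHomogeneous D)
    (hD : D + (n + 1) > ∑ i, e i) : h ∈ Ideal.span (Set.range g) := by
  classical
  -- the X-sequence
  have hXhom : ∀ i : Fin (n + 1), (X i : MvPolynomial (Fin (n + 1)) k).IsHomogeneous 1 :=
    fun i => isHomogeneous_X _ _
  have hXne : ∀ i : Fin (n + 1), (X i : MvPolynomial (Fin (n + 1)) k) ≠ 0 :=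
    fun i => X_ne_zero i
  have hXreg : ∀ (i : Fin (n + 1)) (f : MvPolynomial (Fin (n + 1)) k),
      X i * f ∈ Jm (fun j : Fin (n + 1) => X j) i → f ∈ Jm (fun j : Fin (n + 1) => X j) i := by
    intro i f hf
    exact X_reg {j : Fin (n + 1) | (j : ℕ) < (i : ℕ)} i (by simp) f hf
  have hXprod := Fser_prod (k := k) (fun j : Fin (n + 1) => X j) (fun _ => 1) hXhom hXne hXreg
  rw [FX_eq_one n, Fser_zero_eq] at hXprod
  set F0 : PowerSeries ℤ := PowerSeries.mk fun D =>
    (finrank k (homogeneousSubmodule (Fin (n + 1)) k D) : ℤ) with hF0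
  have hone : ((1 : PowerSeries ℤ) - PowerSeries.X) ^ (n + 1) * F0 = 1 := by
    have : (∏ _i : Fin (n + 1), ((1 : PowerSeries ℤ) - PowerSeries.X ^ (1 : ℕ)))
        = ((1 : PowerSeries ℤ) - PowerSeries.X) ^ (n + 1) := by
      rw [Finset.prod_const, Finset.card_univ, Fintype.card_fin, pow_one]
    rw [← this]
    exact hXprod.symm
  -- the g-sequence
  have hgprod := Fser_prod (k := k) g e hhom hne hreg
  rw [Fser_zero_eq, ← hF0] at hgprod
  have hsplit : (∏ i : Fin (n + 1), ((1 : PowerSeries ℤ) - PowerSeries.X ^ (e i)))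
      = (∏ i : Fin (n + 1), (∑ j ∈ Finset.range (e i), (PowerSeries.X (R := ℤ)) ^ j)) *
        ((1 : PowerSeries ℤ) - PowerSeries.X) ^ (n + 1) := by
    calc ∏ i : Fin (n + 1), ((1 : PowerSeries ℤ) - PowerSeries.X ^ (e i))
        = ∏ i : Fin (n + 1), ((∑ j ∈ Finset.range (e i), (PowerSeries.X (R := ℤ)) ^ j) *
            ((1 : PowerSeries ℤ) - PowerSeries.X)) :=
          Finset.prod_congr rfl fun i _ => one_sub_pow_eq (e i)
      _ = _ := by
          rw [Finset.prod_mul_distrib, Finset.prod_const, Finset.card_univ, Fintype.card_fin]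
  have hfinal : Fser (k := k) g (n + 1)
      = ∏ i : Fin (n + 1), (∑ j ∈ Finset.range (e i), (PowerSeries.X (R := ℤ)) ^ j) := by
    rw [hgprod, hsplit, mul_assoc, hone, mul_one]
  -- degree bound via polynomials
  set P : Polynomial ℤ := ∏ i : Fin (n + 1), ∑ j ∈ Finset.range (e i), Polynomial.X ^ j with hP
  have hPcoe : ((P : Polynomial ℤ) : PowerSeries ℤ)
      = ∏ i : Fin (n + 1), (∑ j ∈ Finset.range (e i), (PowerSeries.X (R := ℤ)) ^ j) := by
    rw [hP, ← Polynomial.coeToPowerSeries.ringHom_apply, map_prod]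
    refine Finset.prod_congr rfl fun i _ => ?_
    rw [map_sum]
    refine Finset.sum_congr rfl fun j _ => ?_
    rw [map_pow, Polynomial.coeToPowerSeries.ringHom_apply, Polynomial.coe_X]
  have hdeg : P.natDegree ≤ ∑ i, (e i - 1) := by
    refine le_trans (Polynomial.natDegree_prod_le _ _) (Finset.sum_le_sum fun i _ => ?_)
    refine Polynomial.natDegree_sum_le_of_forall_le _ _ fun j hj => ?_
    rw [Polynomial.natDegree_X_pow]
    have := Finset.mem_range.1 hj
    omega
  have hsum1 : ∑ i, (e i - 1) + (n + 1) = ∑ i, e i := by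
    have h2 : ∑ i : Fin (n + 1), ((e i - 1) + 1) = ∑ i, e i :=
      Finset.sum_congr rfl fun i _ => Nat.sub_add_cancel (he i)
    rw [Finset.sum_add_distrib, Finset.sum_const, Finset.card_univ, Fintype.card_fin,
      smul_eq_mul, mul_one] at h2
    exact h2
  have hc0 : (PowerSeries.coeff D) (Fser (k := k) g (n + 1)) = 0 := by
    rw [hfinal, ← hPcoe, Polynomial.coeff_coe]
    exact Polynomial.coeff_eq_zero_of_natDegree_lt (by omega)
  have hrk : (finrank k (homogeneousSubmodule (Fin (n + 1)) k D) : ℤ)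
      - (finrank k (JV (k := k) g (n + 1) D) : ℤ) = 0 := by
    simpa [Fser] using hc0
  simp only [JV] at hrk
  haveI := fd_hs (k := k) (Fin (n + 1)) D
  have hVle : homogeneousSubmodule (Fin (n + 1)) k D ≤ JV (k := k) g (n + 1) D := by
    have heq := Submodule.eq_of_le_of_finrank_le
      (inf_le_right : JV (k := k) g (n + 1) D ≤ homogeneousSubmodule (Fin (n + 1)) k D)
      (by rw [sub_eq_zero, Nat.cast_inj] at hrk; exact hrk.le)
    exact le_of_eq heq.symm
  have hmem := hVle ((mem_homogeneousSubmodule _ _).2 hh)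
  have hmem2 : h ∈ Jm (k := k) g (n + 1) := (Submodule.mem_inf.1 hmem).1
  rwa [Jm, show {i : Fin (n + 1) | (i : ℕ) < n + 1} = Set.univ from by ext i; simp [i.is_le],
    Set.image_univ] at hmem2

end final


section assemble

variable {n : ℕ}

theorem low_comp_zero (s : ℕ) :
    ∀ f ∈ (maxIdeal k n) ^ s, ∀ D < s, homogeneousComponent D f = 0 := by
  induction s with
  | zero => intro f _ D hD; omega
  | succ s ih =>
    intro f hf
    rw [pow_succ] at hf
    refine Submodule.mul_induction_on hf ?_ ?_
    · intro a ha b hb D hD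
      refine comp_mul_low (s := s) (t := 1) (fun i hi => ih a ha i hi) (fun j hj => ?_) (by omega)
      have hj0 : j = 0 := by omega
      subst hj0
      rw [homogeneousComponent_zero, coeff_zero_of_mem_span_X hb, map_zero]
    · intro x y hx hy D hD
      rw [map_add, hx D hD, hy D hD, add_zero]

theorem transfer (g : Fin (n + 1) → MvPolynomial (Fin (n + 1)) k)
    (hreg : RingTheory.Sequence.IsRegular (MvPolynomial (Fin (n + 1)) k) (List.ofFn g)) :
    (∀ i, g i ≠ 0) ∧ (∀ (i : Fin (n + 1)) (f : MvPolynomial (Fin (n + 1)) k),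
      g i * f ∈ Jm g i → f ∈ Jm g i) := by
  have hlen : (List.ofFn g).length = n + 1 := List.length_ofFn
  -- identify the partial ideals
  have hIdeq : ∀ i : Fin (n + 1),
      Ideal.ofList ((List.ofFn g).take (i : ℕ)) = Jm g (i : ℕ) := by
    intro i
    have hset : {r | r ∈ (List.ofFn g).take (i : ℕ)}
        = g '' {j : Fin (n + 1) | (j : ℕ) < (i : ℕ)} := by
      ext x
      simp only [Set.mem_setOf_eq, Set.mem_image]
      constructor
      · intro hx
        obtain ⟨m, hm, hx⟩ := List.mem_iff_getElem.1 hx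
        have hm' : m < (i : ℕ) := by
          rw [List.length_take, hlen] at hm; omega
        have hm'' : m < n + 1 := lt_trans hm' i.isLt
        refine ⟨⟨m, hm''⟩, hm', ?_⟩
        rw [← hx, List.getElem_take, List.getElem_ofFn]
      · rintro ⟨j, hj, rfl⟩
        refine List.mem_iff_getElem.2 ⟨(j : ℕ), ?_, ?_⟩
        · rw [List.length_take, hlen]
          exact lt_min hj j.isLt
        · rw [List.getElem_take, List.getElem_ofFn]
    rw [Ideal.ofList, hset, Jm]
  have hsmul : ∀ i : Fin (n + 1),
      (Ideal.ofList ((List.ofFn g).take (i : ℕ)) •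
        (⊤ : Submodule (MvPolynomial (Fin (n + 1)) k) (MvPolynomial (Fin (n + 1)) k)))
      = Jm g (i : ℕ) := by
    intro i
    rw [hIdeq i, smul_eq_mul, Ideal.mul_top]
  have hsm : ∀ i : Fin (n + 1), IsSMulRegular
      (MvPolynomial (Fin (n + 1)) k ⧸ (Jm g (i : ℕ) :
        Submodule (MvPolynomial (Fin (n + 1)) k) (MvPolynomial (Fin (n + 1)) k))) (g i) := by
    intro i
    have h1 := hreg.toIsWeaklyRegular.regular_mod_prev (i : ℕ) (by rw [hlen]; exact i.isLt)
    rw [List.getElem_ofFn] at h1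
    rw [hsmul i] at h1
    simpa using h1
  constructor
  · intro i h0
    have hsub : ∀ x y : (MvPolynomial (Fin (n + 1)) k ⧸ (Jm g (i : ℕ) :
        Submodule (MvPolynomial (Fin (n + 1)) k) (MvPolynomial (Fin (n + 1)) k))), x = y := by
      intro x y
      apply hsm i
      simp [h0]
    have h1 : (1 : MvPolynomial (Fin (n + 1)) k) ∈ Jm g (i : ℕ) := by
      have h2 := (Submodule.Quotient.eq _).1
        (hsub (Submodule.Quotient.mk 1) (Submodule.Quotient.mk 0))
      rwa [sub_zero] at h2
    have hJtop : Jm g (i : ℕ) = ⊤ := (Ideal.eq_top_iff_one _).2 h1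
    have htop : Ideal.ofList (List.ofFn g) • (⊤ :
        Submodule (MvPolynomial (Fin (n + 1)) k) (MvPolynomial (Fin (n + 1)) k)) = ⊤ := by
      have hofl : Ideal.ofList (List.ofFn g)
          = Ideal.span (Set.range g) := by
        rw [Ideal.ofList]
        congr 1
        ext x
        simp only [Set.mem_setOf_eq, List.mem_ofFn, Set.mem_range]
      rw [hofl, smul_eq_mul, Ideal.mul_top, eq_top_iff, ← hJtop]
      exact Ideal.span_mono (Set.image_subset_range g _)
    exact hreg.top_ne_smul htop.symm
  · intro i f hgf
    have h1 : (g i) • (Submodule.Quotient.mk f :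
        MvPolynomial (Fin (n + 1)) k ⧸ (Jm g (i : ℕ) :
          Submodule (MvPolynomial (Fin (n + 1)) k) (MvPolynomial (Fin (n + 1)) k)))
        = (g i) • (Submodule.Quotient.mk 0) := by
      rw [← Submodule.Quotient.mk_smul, ← Submodule.Quotient.mk_smul]
      apply (Submodule.Quotient.eq _).2
      rw [smul_zero, sub_zero]
      simpa [smul_eq_mul] using hgf
    have h3 := (Submodule.Quotient.eq _).1 (hsm i h1)
    rwa [sub_zero] at h3

end assemble

end Stmt10Aux


theorem stmt10 (k : Type) [Field k] (p : ℕ) [Fact p.Prime] [CharP k p] (n : ℕ)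
    (g : Fin (n + 1) → MvPolynomial (Fin (n + 1)) k) (e : Fin (n + 1) → ℕ)
    (he : ∀ i, 1 ≤ e i) (hhom : ∀ i, (g i).IsHomogeneous (e i))
    (hreg : RingTheory.Sequence.IsRegular (MvPolynomial (Fin (n + 1)) k) (List.ofFn g)) :
    (maxIdeal k n) ^ ((∑ i, e i) - n) ≤ Ideal.span (Set.range g) ∧
      ∀ (h : MvPolynomial (Fin (n + 1)) k) (D : ℕ), h.IsHomogeneous D →
        D + (n + 1) > ∑ i, e i → h ∈ Ideal.span (Set.range g) := by
  obtain ⟨hne, hreg'⟩ := Stmt10Aux.transfer g hreg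
  have part2 : ∀ (h : MvPolynomial (Fin (n + 1)) k) (D : ℕ), h.IsHomogeneous D →
      D + (n + 1) > ∑ i, e i → h ∈ Ideal.span (Set.range g) :=
    fun h D hh hD => Stmt10Aux.main_membership g e he hhom hne hreg' h D hh hD
  refine ⟨?_, part2⟩
  intro f hf
  have hsum : n + 1 ≤ ∑ i, e i := by
    have h1 : (∑ _i : Fin (n + 1), 1) ≤ ∑ i, e i := Finset.sum_le_sum fun i _ => he i
    simpa using h1
  have hlow := Stmt10Aux.low_comp_zero ((∑ i, e i) - n) f hf
  rw [← sum_homogeneousComponent f]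
  refine Ideal.sum_mem _ fun D _ => ?_
  by_cases hD : D < (∑ i, e i) - n
  · rw [hlow D hD]; exact Ideal.zero_mem _
  · exact part2 _ D (homogeneousComponent_isHomogeneous D f) (by omega)

end
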